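/- For every y ∈ ℝ^{F×R}, the inner product of the gradient of Q with y satisfies ∇Q(y)·y ≤ (17/8)‖y‖², where ‖·‖ is the Euclidean norm. -/

import Mathlib

set_option maxHeartbeats 1000000
open scoped BigOperators RealInnerProductSpace

noncomputable def Q (F R : ℕ) (y : EuclideanSpace ℝ (Fin F × Fin R)) : ℝ :=
  -(1/2) * ∑ r : Fin R,
    ((∑ φ : Fin F, (y (φ, r))^2 - 1)^2 + ∑ φ : Fin F, (y (φ, r))^2 * (1 - y (φ, r))^2)

theorem stmt_9 (F R : ℕ) (hF : 0 < F) (hR : 0 < R)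
    (y : EuclideanSpace ℝ (Fin F × Fin R)) :
    ⟪gradient (Q F R) y, y⟫ ≤ (17 / 8) * ‖y‖ ^ 2 := by
  have hproj : ∀ i : Fin F × Fin R, HasFDerivAt (𝕜 := ℝ) (⇑(EuclideanSpace.proj i) : EuclideanSpace ℝ (Fin F × Fin R) → ℝ)
      (EuclideanSpace.proj i) y := fun i => ContinuousLinearMap.hasFDerivAt _
  have hQ := HasFDerivAt.const_mul
    (HasFDerivAt.fun_sum (u := Finset.univ) (fun r (_ : r ∈ Finset.univ) =>
      HasFDerivAt.add
        (HasFDerivAt.mul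
          (HasFDerivAt.sub_const 1
            (HasFDerivAt.fun_sum (u := Finset.univ) (fun φ (_ : φ ∈ Finset.univ) =>
              (hproj (φ, r)).mul (hproj (φ, r)))))
          (HasFDerivAt.sub_const 1
            (HasFDerivAt.fun_sum (u := Finset.univ) (fun φ (_ : φ ∈ Finset.univ) =>
              (hproj (φ, r)).mul (hproj (φ, r))))))
        (HasFDerivAt.fun_sum (u := Finset.univ) (fun φ (_ : φ ∈ Finset.univ) =>
          HasFDerivAt.mul
            ((hproj (φ, r)).mul (hproj (φ, r)))
            (((hasFDerivAt_const (1:ℝ) y).sub (hproj (φ, r))).mul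
             ((hasFDerivAt_const (1:ℝ) y).sub (hproj (φ, r))))))))
    (-(1/2 : ℝ))
  have hQ2 := hQ.congr_of_eventuallyEq (Filter.Eventually.of_forall
    (fun z => by show Q F R z = _; simp [Q, pow_two]))
  have hL := hQ2.fderiv
  have hgrad : ⟪gradient (Q F R) y, y⟫ = (fderiv ℝ (Q F R) y) y := by
    unfold gradient
    exact InnerProductSpace.toDual_symm_apply
  rw [hgrad, hL]
  have hnorm : ‖y‖^2 = ∑ i : Fin F × Fin R, (y i)^2 := by
    rw [← real_inner_self_eq_norm_sq, PiLp.inner_apply]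
    simp [pow_two]
  rw [hnorm]
  simp only [ContinuousLinearMap.smul_apply, ContinuousLinearMap.add_apply,
    ContinuousLinearMap.coe_sum', Finset.sum_apply, ContinuousLinearMap.sub_apply,
    ContinuousLinearMap.zero_apply, smul_eq_mul, PiLp.proj_apply, Pi.mul_apply, Pi.sub_apply]
  simp only [pow_two]
  have hRHS : (17/8 : ℝ) * ∑ x : Fin F × Fin R, y x * y x
      = ∑ r : Fin R, ∑ φ : Fin F, (17/8 : ℝ) * (y (φ, r) * y (φ, r)) := by
    rw [Finset.mul_sum, Fintype.sum_prod_type, Finset.sum_comm]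
  rw [hRHS, Finset.mul_sum]
  apply Finset.sum_le_sum
  intro r _
  have hs : (0:ℝ) ≤ ∑ φ : Fin F, y (φ, r) * y (φ, r) :=
    Finset.sum_nonneg fun φ _ => mul_self_nonneg _
  have hA : ∑ φ : Fin F, (y (φ, r) * y (φ, r) + y (φ, r) * y (φ, r))
      = (∑ φ : Fin F, y (φ, r) * y (φ, r)) + (∑ φ : Fin F, y (φ, r) * y (φ, r)) :=
    Finset.sum_add_distrib
  have hW : -(1/4) * (∑ φ : Fin F, y (φ, r) * y (φ, r)) ≤
      ∑ φ : Fin F, (y (φ, r) * y (φ, r) * ((1 - y (φ, r)) * (0 - y (φ, r)) + (1 - y (φ, r)) * (0 - y (φ, r))) +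
        (1 - y (φ, r)) * (1 - y (φ, r)) * (y (φ, r) * y (φ, r) + y (φ, r) * y (φ, r))) := by
    rw [Finset.mul_sum]
    apply Finset.sum_le_sum
    intro φ _
    nlinarith [sq_nonneg (2 * y (φ, r) * y (φ, r) - 3/2 * y (φ, r))]
  have h17 : ∑ φ : Fin F, (17/8 : ℝ) * (y (φ, r) * y (φ, r))
      = 17/8 * ∑ φ : Fin F, y (φ, r) * y (φ, r) := (Finset.mul_sum _ _ _).symm
  rw [hA, h17]
  set s := ∑ φ : Fin F, y (φ, r) * y (φ, r) with hsdef
  set W := ∑ φ : Fin F, (y (φ, r) * y (φ, r) * ((1 - y (φ, r)) * (0 - y (φ, r)) + (1 - y (φ, r)) * (0 - y (φ, r))) +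
        (1 - y (φ, r)) * (1 - y (φ, r)) * (y (φ, r) * y (φ, r) + y (φ, r) * y (φ, r))) with hWdef
  nlinarith [hs, hW, sq_nonneg s]
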